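/- Let n ≥ 1 and let f, u : EuclideanSpace ℝ (Fin n) → ℝ be locally Lipschitz functions that are everywhere strictly positive. Assume that for every nonnegative Lipschitz function φ : EuclideanSpace ℝ (Fin n) → ℝ with compact support one has ∫ ⟨∇u(x), ∇φ(x)⟩ f(x) dx ≥ 0, where ∇ denotes the gradient, which exists Lebesgue-almost everywhere by Rademacher's theorem. Then for every nonnegative Lipschitz function φ with compact support: ∫ φ(x)² ‖∇u(x)‖² / (1 + u(x))² · f(x) dx ≤ 16 ∫ ‖∇φ(x)‖² f(x) dx. -/

import Mathlib

open MeasureTheory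
open scoped RealInnerProductSpace

open Metric Set

open MeasureTheory Metric Set
open scoped RealInnerProductSpace


/-- A locally Lipschitz function is Lipschitz on compact convex sets. -/
lemma locallyLipschitz_lipschitzOnWith {E : Type*} [NormedAddCommGroup E] [NormedSpace ℝ E]
    (u : E → ℝ) (hu : LocallyLipschitz u) {s : Set E} (hs : IsCompact s) (hc : Convex ℝ s) :
    ∃ C : NNReal, LipschitzOnWith C u s := by
  have key : ∀ x : E, ∃ ε : ℝ, 0 < ε ∧ ∃ K : NNReal, LipschitzOnWith K u (ball x ε) := by
    intro x
    obtain ⟨K, t, ht, hlip⟩ := hu x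
    obtain ⟨ε, hε, hball⟩ := Metric.mem_nhds_iff.1 ht
    exact ⟨ε, hε, K, hlip.mono hball⟩
  choose ε hε K hK using key
  rcases s.eq_empty_or_nonempty with rfl | ⟨x₀, hx₀⟩
  · exact ⟨1, by simp⟩
  obtain ⟨F, hFs, hFcov⟩ := hs.elim_nhds_subcover (fun x => ball x (ε x / 2))
    (fun x _ => ball_mem_nhds x (half_pos (hε x)))
  have hFne : F.Nonempty := by
    rcases Set.mem_iUnion₂.1 (hFcov hx₀) with ⟨i, hi, _⟩
    exact ⟨i, hi⟩
  set C : NNReal := F.sup K with hC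
  set δ : ℝ := F.inf' hFne (fun x => ε x / 2) with hδ
  have hδpos : 0 < δ := by
    rw [hδ]
    apply (Finset.lt_inf'_iff hFne).2
    intro i _
    exact half_pos (hε i)
  -- Step 1: points at distance ≤ δ
  have step1 : ∀ a ∈ s, ∀ b ∈ s, dist a b ≤ δ → dist (u a) (u b) ≤ C * dist a b := by
    intro a ha b hb hd
    rcases Set.mem_iUnion₂.1 (hFcov ha) with ⟨i, hi, hai⟩
    have hδi : δ ≤ ε i / 2 := Finset.inf'_le _ hi
    have hbi : b ∈ ball i (ε i) := by
      have : dist b i ≤ dist b a + dist a i := dist_triangle _ _ _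
      have hai' : dist a i < ε i / 2 := mem_ball.1 hai
      have : dist b i < ε i := by
        rw [dist_comm] at hd
        linarith
      exact mem_ball.2 this
    have hai2 : a ∈ ball i (ε i) := mem_ball.2 (lt_of_lt_of_le (mem_ball.1 hai) (by linarith [hε i]))
    have := (lipschitzOnWith_iff_dist_le_mul.1 (hK i)) a hai2 b hbi
    calc dist (u a) (u b) ≤ (K i : ℝ) * dist a b := this
      _ ≤ C * dist a b := by
          apply mul_le_mul_of_nonneg_right _ dist_nonneg
          exact_mod_cast NNReal.coe_le_coe.2 (Finset.le_sup hi)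
  -- Step 2: general points via subdivision of the segment
  refine ⟨C, lipschitzOnWith_iff_dist_le_mul.2 ?_⟩
  intro a ha b hb
  obtain ⟨m, hm⟩ := exists_nat_ge (dist a b / δ)
  rcases Nat.eq_zero_or_pos m with rfl | hmpos
  · have : dist a b ≤ 0 := by
      have hm' : dist a b / δ ≤ 0 := by simpa using hm
      by_contra h
      push_neg at h
      have : 0 < dist a b / δ := div_pos h hδpos
      linarith
    have hab : a = b := by
      have := dist_nonneg (x := a) (y := b)
      have : dist a b = 0 := le_antisymm ‹dist a b ≤ 0› this
      exact dist_eq_zero.1 this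
    simp [hab]
  set z : ℕ → E := fun j => a + ((j : ℝ) / m) • (b - a) with hz
  have hmR : (0:ℝ) < m := by exact_mod_cast hmpos
  have hz0 : z 0 = a := by simp [hz]
  have hzm : z m = b := by
    simp only [hz]
    rw [div_self (ne_of_gt hmR), one_smul]
    abel
  have hzmem : ∀ j : ℕ, j ≤ m → z j ∈ s := by
    intro j hj
    have h0 : (0:ℝ) ≤ (j:ℝ)/m := by positivity
    have h1 : (j:ℝ)/m ≤ 1 := by
      rw [div_le_one hmR]; exact_mod_cast hj
    have := hc ha hb (by linarith : (0:ℝ) ≤ 1 - (j:ℝ)/m) h0 (by ring)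
    convert this using 1
    simp [hz, smul_sub, sub_smul]
    module
  have hdistz : ∀ j : ℕ, dist (z j) (z (j+1)) = dist a b / m := by
    intro j
    have : z j - z (j+1) = (((j:ℝ)/m) - ((j+1:ℕ):ℝ)/m) • (b - a) := by
      simp only [hz, sub_smul]
      module
    rw [dist_eq_norm, this, norm_smul]
    have : ((j:ℝ)/m) - ((j+1:ℕ):ℝ)/m = -(1/m) := by
      push_cast
      field_simp
      ring
    rw [this, dist_eq_norm]
    rw [Real.norm_eq_abs, abs_neg, abs_of_pos (by positivity : (0:ℝ) < 1/m), norm_sub_rev]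
    ring
  have hsmall : dist a b / m ≤ δ := by
    rw [div_le_iff₀ hmR]
    calc dist a b = (dist a b / δ) * δ := by field_simp
      _ ≤ (m:ℝ) * δ := by
          apply mul_le_mul_of_nonneg_right hm (le_of_lt hδpos)
      _ = δ * m := by ring
  calc dist (u a) (u b) = dist (u (z 0)) (u (z m)) := by rw [hz0, hzm]
    _ ≤ ∑ j ∈ Finset.range m, dist (u (z j)) (u (z (j+1))) :=
        dist_le_range_sum_dist (fun j => u (z j)) m
    _ ≤ ∑ j ∈ Finset.range m, (C : ℝ) * (dist a b / m) := by
        apply Finset.sum_le_sum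
        intro j hj
        have hj' : j < m := Finset.mem_range.1 hj
        have h1 := hzmem j (le_of_lt hj')
        have h2 := hzmem (j+1) hj'
        have := step1 _ h1 _ h2 (by rw [hdistz j]; exact hsmall)
        rwa [hdistz j] at this
    _ = (C : ℝ) * dist a b := by
        rw [Finset.sum_const, Finset.card_range, nsmul_eq_mul]
        field_simp


/-- The truncated reciprocal `t ↦ (1 + max t 0)⁻¹` is 1-Lipschitz. -/
lemma lipschitz_trunc_inv : LipschitzWith 1 (fun t : ℝ => (1 + max t 0)⁻¹) := by
  apply LipschitzWith.of_dist_le_mul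
  intro x y
  set a := max x 0 with ha
  set b := max y 0 with hb
  have ha0 : 0 ≤ a := le_max_right _ _
  have hb0 : 0 ≤ b := le_max_right _ _
  have ha1 : (0:ℝ) < 1 + a := by linarith
  have hb1 : (0:ℝ) < 1 + b := by linarith
  rw [Real.dist_eq, Real.dist_eq, NNReal.coe_one, one_mul]
  have key : (1 + a)⁻¹ - (1 + b)⁻¹ = (b - a) / ((1 + a) * (1 + b)) := by
    field_simp
    ring
  rw [key, abs_div]
  have hd : |(1 + a) * (1 + b)| = (1 + a) * (1 + b) := abs_of_pos (by positivity)
  rw [hd]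
  have h1 : |b - a| / ((1 + a) * (1 + b)) ≤ |b - a| := by
    apply div_le_self (abs_nonneg _)
    nlinarith
  refine h1.trans ?_
  have := abs_max_sub_max_le_abs y x 0
  rw [abs_sub_comm x y]
  simpa [ha, hb] using this

/-- Product of bounded Lipschitz functions is Lipschitz. -/
lemma lipschitz_mul_bdd {α : Type*} [PseudoMetricSpace α] {f g : α → ℝ} {Kf Kg : NNReal}
    (hf : LipschitzWith Kf f) (hg : LipschitzWith Kg g) {A B : ℝ}
    (hA : ∀ x, |f x| ≤ A) (hB : ∀ x, |g x| ≤ B) :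
    ∃ K : NNReal, LipschitzWith K (fun x => f x * g x) := by
  refine ⟨Real.toNNReal A * Kg + Real.toNNReal B * Kf, ?_⟩
  apply LipschitzWith.of_dist_le_mul
  intro x y
  have hfd := hf.dist_le_mul x y
  have hgd := hg.dist_le_mul x y
  rw [Real.dist_eq] at hfd hgd ⊢
  have expand : f x * g x - f y * g y = f x * (g x - g y) + g y * (f x - f y) := by ring
  calc |f x * g x - f y * g y| ≤ |f x| * |g x - g y| + |g y| * |f x - f y| := by
        rw [expand]
        refine (abs_add_le _ _).trans ?_
        rw [abs_mul, abs_mul]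
    _ ≤ A * ((Kg : ℝ) * dist x y) + B * ((Kf : ℝ) * dist x y) := by
        have h1 : |f x| * |g x - g y| ≤ A * ((Kg:ℝ) * dist x y) :=
          mul_le_mul (hA x) hgd (abs_nonneg _) ((abs_nonneg _).trans (hA x))
        have h2 : |g y| * |f x - f y| ≤ B * ((Kf:ℝ) * dist x y) :=
          mul_le_mul (hB y) hfd (abs_nonneg _) ((abs_nonneg _).trans (hB y))
        linarith
    _ ≤ ((Real.toNNReal A * Kg + Real.toNNReal B * Kf : NNReal) : ℝ) * dist x y := by
        push_cast
        rw [Real.coe_toNNReal', Real.coe_toNNReal']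
        have hA' : A ≤ max A 0 := le_max_left _ _
        have hB' : B ≤ max B 0 := le_max_left _ _
        have hd0 : (0:ℝ) ≤ dist x y := dist_nonneg
        have e1 : A * ((Kg:ℝ) * dist x y) ≤ (max A 0) * ((Kg:ℝ) * dist x y) :=
          mul_le_mul_of_nonneg_right hA' (by positivity)
        have e2 : B * ((Kf:ℝ) * dist x y) ≤ (max B 0) * ((Kf:ℝ) * dist x y) :=
          mul_le_mul_of_nonneg_right hB' (by positivity)
        nlinarith

lemma inner_gradient' {E : Type*} [NormedAddCommGroup E] [InnerProductSpace ℝ E] [CompleteSpace E]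
    (f : E → ℝ) (x v : E) : ⟪gradient f x, v⟫ = fderiv ℝ f x v :=
  InnerProductSpace.toDual_symm_apply

lemma norm_gradient' {E : Type*} [NormedAddCommGroup E] [InnerProductSpace ℝ E] [CompleteSpace E]
    (f : E → ℝ) (x : E) : ‖gradient f x‖ = ‖fderiv ℝ f x‖ := by
  rw [gradient]
  exact LinearIsometryEquiv.norm_map _ _

/-- Integrability from a bound on a compact set outside which the function vanishes. -/
lemma integrable_of_compact_bound {E : Type*} [NormedAddCommGroup E] [MeasurableSpace E]
    [BorelSpace E] {μ : Measure E} [IsFiniteMeasureOnCompacts μ]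
    (g : E → ℝ) (hm : AEStronglyMeasurable g μ) {s : Set E} (hs : IsCompact s)
    (h0 : ∀ x ∉ s, g x = 0) (M : ℝ) (hM : ∀ x ∈ s, |g x| ≤ M) : Integrable g μ := by
  have hind : Integrable (s.indicator (fun _ => M)) μ := by
    rw [integrable_indicator_iff hs.measurableSet]
    exact integrableOn_const hs.measure_lt_top.ne (by simp)
  apply Integrable.mono' hind hm
  filter_upwards with x
  by_cases hx : x ∈ s
  · rw [Set.indicator_of_mem hx]
    simpa using hM x hx
  · rw [Set.indicator_of_notMem hx, h0 x hx]
    simp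

lemma abs_prod2_le {a b A B : ℝ} (ha : |a| ≤ A) (hb : |b| ≤ B) : |a * b| ≤ A * B := by
  rw [abs_mul]
  exact mul_le_mul ha hb (abs_nonneg b) ((abs_nonneg a).trans ha)

lemma abs_prod3_le {a b c A B C : ℝ} (ha : |a| ≤ A) (hb : |b| ≤ B) (hc : |c| ≤ C) :
    |a * b * c| ≤ A * B * C :=
  abs_prod2_le (abs_prod2_le ha hb) hc

lemma abs_prod4_le {a b c d A B C D : ℝ} (ha : |a| ≤ A) (hb : |b| ≤ B) (hc : |c| ≤ C)
    (hd : |d| ≤ D) : |a * b * c * d| ≤ A * B * C * D :=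
  abs_prod2_le (abs_prod3_le ha hb hc) hd


set_option maxHeartbeats 1000000 in
/-- **Yau-type integration-by-parts inequality.**
Let `f, u : ℝⁿ → ℝ` be locally Lipschitz and strictly positive, and assume that `u`
is weakly superharmonic with respect to the weight `f`, i.e.
`∫ ⟪∇u, ∇φ⟫ f ≥ 0` for every nonnegative compactly supported Lipschitz `φ`.
Then for every nonnegative compactly supported Lipschitz `φ` one has
`∫ φ² ‖∇u‖² / (1 + u)² · f ≤ 16 ∫ ‖∇φ‖² f`.
All gradients are taken via Mathlib's `gradient`, which agrees a.e. with the true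
gradient by Rademacher's theorem; integrals are over Lebesgue measure. -/
theorem yau_integration_by_parts (n : ℕ) (hn : 1 ≤ n)
    (f u : EuclideanSpace ℝ (Fin n) → ℝ)
    (hf : LocallyLipschitz f) (hu : LocallyLipschitz u)
    (hfpos : ∀ x, 0 < f x) (hupos : ∀ x, 0 < u x)
    (hsuper : ∀ φ : EuclideanSpace ℝ (Fin n) → ℝ, (∀ x, 0 ≤ φ x) →
      (∃ K, LipschitzWith K φ) → HasCompactSupport φ →
      0 ≤ ∫ x, ⟪gradient u x, gradient φ x⟫ * f x) :
    ∀ φ : EuclideanSpace ℝ (Fin n) → ℝ, (∀ x, 0 ≤ φ x) →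
      (∃ K, LipschitzWith K φ) → HasCompactSupport φ →
      ∫ x, φ x ^ 2 * (‖gradient u x‖ ^ 2 / (1 + u x) ^ 2) * f x ≤
        16 * ∫ x, ‖gradient φ x‖ ^ 2 * f x := by
  rintro φ hφ0 ⟨Kφ, hφlip⟩ hφc
  have hφcont : Continuous φ := hφlip.continuous
  have hucont : Continuous u := hu.continuous
  have hfcont : Continuous f := hf.continuous
  -- radius
  obtain ⟨R0, hR0⟩ := (isBounded_iff_subset_closedBall (0 : EuclideanSpace ℝ (Fin n))).1
    hφc.isBounded
  set R : ℝ := max R0 0 with hRdef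
  have hK : tsupport φ ⊆ closedBall 0 R :=
    hR0.trans (closedBall_subset_closedBall (le_max_left _ _))
  -- Lipschitz extension of u from the big ball
  obtain ⟨Cu, hCu⟩ := locallyLipschitz_lipschitzOnWith u hu
    (isCompact_closedBall (0 : EuclideanSpace ℝ (Fin n)) (R + 2)) (convex_closedBall _ _)
  obtain ⟨g, hglip, hgeq⟩ := hCu.extend_real
  have hVB : ∀ x ∈ ball (0 : EuclideanSpace ℝ (Fin n)) (R + 1), ball x 1 ⊆ closedBall 0 (R + 2) := by
    intro x hx y hy
    have h1 : dist y x < 1 := mem_ball.1 hy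
    have h2 : dist x 0 < R + 1 := mem_ball.1 hx
    have := dist_triangle y x 0
    exact mem_closedBall.2 (by linarith)
  have hgu : ∀ x ∈ ball (0 : EuclideanSpace ℝ (Fin n)) (R + 1), ∀ y ∈ ball x 1, g y = u y :=
    fun x hx y hy => (hgeq (hVB x hx hy)).symm
  have hKV : tsupport φ ⊆ ball (0 : EuclideanSpace ℝ (Fin n)) (R + 1) :=
    hK.trans (closedBall_subset_ball (by linarith))
  -- bound for φ
  obtain ⟨Bφ0, hBφ0⟩ := hφc.exists_bound_of_continuousOn hφcont.continuousOn
  set Bφ : ℝ := max Bφ0 0 with hBφdef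
  have hBφ : ∀ x, |φ x| ≤ Bφ := by
    intro x
    by_cases hx : x ∈ tsupport φ
    · exact le_trans (by simpa [Real.norm_eq_abs] using hBφ0 x hx) (le_max_left _ _)
    · rw [image_eq_zero_of_notMem_tsupport hx, abs_zero]
      exact le_max_right _ _
  have hBφ_nonneg : 0 ≤ Bφ := le_max_right _ _
  -- the test function ψ
  have hhg : LipschitzWith (1 * Cu) (fun x => (1 + max (g x) 0)⁻¹) :=
    lipschitz_trunc_inv.comp hglip
  have hhg_bdd : ∀ x : EuclideanSpace ℝ (Fin n), |(1 + max (g x) 0)⁻¹| ≤ 1 := by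
    intro x
    have h1 : (0:ℝ) < 1 + max (g x) 0 := by
      have := le_max_right (g x) (0:ℝ); linarith
    rw [abs_of_pos (inv_pos.2 h1)]
    exact inv_le_one_of_one_le₀ (by linarith [le_max_right (g x) (0:ℝ)])
  obtain ⟨K2, hK2⟩ := lipschitz_mul_bdd hφlip hφlip hBφ hBφ
  have hφφ_bdd : ∀ x, |φ x * φ x| ≤ Bφ * Bφ := fun x => abs_prod2_le (hBφ x) (hBφ x)
  obtain ⟨Kψ, hKψ⟩ := lipschitz_mul_bdd hK2 hhg hφφ_bdd hhg_bdd
  set ψ : EuclideanSpace ℝ (Fin n) → ℝ := fun x => φ x * φ x * (1 + max (g x) 0)⁻¹ with hψdef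
  have hψlip : LipschitzWith Kψ ψ := hKψ
  have hψ0 : ∀ x, 0 ≤ ψ x := by
    intro x
    apply mul_nonneg (mul_self_nonneg _)
    have := le_max_right (g x) (0:ℝ)
    positivity
  have hψc : HasCompactSupport ψ := by
    apply hφc.mono
    intro x hx
    intro hφx
    apply hx
    simp [hψdef, hφx]
  have hsup0 : 0 ≤ ∫ x, ⟪gradient u x, gradient ψ x⟫ * f x :=
    hsuper ψ hψ0 ⟨Kψ, hψlip⟩ hψc
  -- the three integrands
  set G : EuclideanSpace ℝ (Fin n) → ℝ :=
    fun x => φ x * (1 + u x)⁻¹ * ⟪gradient u x, gradient φ x⟫ * f x with hGdef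
  set H : EuclideanSpace ℝ (Fin n) → ℝ :=
    fun x => φ x ^ 2 * (‖gradient u x‖ ^ 2 / (1 + u x) ^ 2) * f x with hHdef
  set Rr : EuclideanSpace ℝ (Fin n) → ℝ :=
    fun x => ‖gradient φ x‖ ^ 2 * f x with hRdef2
  -- a.e. differentiability
  have hgd : ∀ᵐ x, DifferentiableAt ℝ g x := hglip.ae_differentiableAt
  have hφd : ∀ᵐ x, DifferentiableAt ℝ φ x := hφlip.ae_differentiableAt
  -- the key a.e. identity
  have hae : ∀ᵐ x, ⟪gradient u x, gradient ψ x⟫ * f x = 2 * G x - H x := by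
    filter_upwards [hgd, hφd] with x hgx hφx
    by_cases hxV : x ∈ ball (0 : EuclideanSpace ℝ (Fin n)) (R + 1)
    · -- on the good ball
      have hball : ball x 1 ∈ nhds x := ball_mem_nhds x one_pos
      have hueq : u =ᶠ[nhds x] g := by
        filter_upwards [hball] with y hy
        exact (hgu x hxV y hy).symm
      have hud : DifferentiableAt ℝ u x := hgx.congr_of_eventuallyEq hueq
      have hbne : (1 : ℝ) + u x ≠ 0 := by have := hupos x; positivity
      have hψeq : ψ =ᶠ[nhds x] fun y => φ y * φ y * (1 + u y)⁻¹ := by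
        filter_upwards [hball] with y hy
        have h1 : g y = u y := hgu x hxV y hy
        have h2 : max (u y) 0 = u y := max_eq_left (hupos y).le
        simp [hψdef, h1, h2]
      -- derivative computation
      have hb : HasFDerivAt (fun y => 1 + u y) (fderiv ℝ u x) x :=
        (hud.hasFDerivAt).const_add 1
      have hinv : HasFDerivAt (fun y => (1 + u y)⁻¹)
          (-(((1 + u x) ^ 2)⁻¹) • fderiv ℝ u x) x := by
        have hcomp := (hasFDerivAt_inv' (𝕜 := ℝ) (R := ℝ) hbne).comp x hb
        refine hcomp.congr_fderiv ?_
        ext v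
        simp only [ContinuousLinearMap.coe_comp', Function.comp_apply,
          ContinuousLinearMap.neg_apply, ContinuousLinearMap.mulLeftRight_apply,
          ContinuousLinearMap.coe_smul', Pi.smul_apply, smul_eq_mul]
        rw [sq, mul_inv]
        ring
      have hsq : HasFDerivAt (fun y => φ y * φ y)
          (φ x • fderiv ℝ φ x + φ x • fderiv ℝ φ x) x :=
        hφx.hasFDerivAt.mul hφx.hasFDerivAt
      have hmul : HasFDerivAt (fun y => φ y * φ y * (1 + u y)⁻¹)
          ((φ x * φ x) • (-(((1 + u x) ^ 2)⁻¹) • fderiv ℝ u x) +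
            (1 + u x)⁻¹ • (φ x • fderiv ℝ φ x + φ x • fderiv ℝ φ x)) x := hsq.mul hinv
      have hψD : HasFDerivAt ψ
          ((φ x * φ x) • (-(((1 + u x) ^ 2)⁻¹) • fderiv ℝ u x) +
            (1 + u x)⁻¹ • (φ x • fderiv ℝ φ x + φ x • fderiv ℝ φ x)) x :=
        hmul.congr_of_eventuallyEq hψeq
      have hinner : ⟪gradient u x, gradient ψ x⟫ =
          (φ x * φ x) * (-(((1 + u x) ^ 2)⁻¹) * (fderiv ℝ u x (gradient u x))) +
            (1 + u x)⁻¹ * (φ x * (fderiv ℝ φ x (gradient u x)) +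
              φ x * (fderiv ℝ φ x (gradient u x))) := by
        rw [real_inner_comm, inner_gradient', hψD.fderiv]
        simp [ContinuousLinearMap.add_apply, smul_eq_mul, mul_assoc]
        ring
      have e1 : fderiv ℝ u x (gradient u x) = ‖gradient u x‖ ^ 2 := by
        rw [← inner_gradient', real_inner_self_eq_norm_sq]
      have e2 : fderiv ℝ φ x (gradient u x) = ⟪gradient u x, gradient φ x⟫ := by
        rw [← inner_gradient', real_inner_comm]
      rw [hinner, e1, e2, hGdef, hHdef]
      field_simp
      ring
    · -- outside the support
      have hxs : x ∉ tsupport φ := fun hx => hxV (hKV hx)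
      have hφ0x : φ x = 0 := image_eq_zero_of_notMem_tsupport hxs
      have hψz : ψ =ᶠ[nhds x] 0 := by
        filter_upwards [notMem_tsupport_iff_eventuallyEq.1 hxs] with y hy
        simp [hψdef, hy]
      have hgradψ : gradient ψ x = 0 := by
        rw [gradient, hψz.fderiv_eq]
        have : fderiv ℝ (0 : EuclideanSpace ℝ (Fin n) → ℝ) x = 0 := fderiv_const_apply (0:ℝ)
        rw [this]
        simp
      simp [hgradψ, hGdef, hHdef, hφ0x]
  -- measurability
  have mgu : Measurable (fun x : EuclideanSpace ℝ (Fin n) => gradient u x) :=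
    ((InnerProductSpace.toDual ℝ _).symm.continuous.measurable).comp (measurable_fderiv ℝ u)
  have mgφ : Measurable (fun x : EuclideanSpace ℝ (Fin n) => gradient φ x) :=
    ((InnerProductSpace.toDual ℝ _).symm.continuous.measurable).comp (measurable_fderiv ℝ φ)
  -- bounds
  obtain ⟨Mf0, hMf0⟩ := hφc.exists_bound_of_continuousOn hfcont.continuousOn
  set Mf : ℝ := max Mf0 0 with hMfdef
  have hMf : ∀ x ∈ tsupport φ, |f x| ≤ Mf := fun x hx =>
    le_trans (by simpa [Real.norm_eq_abs] using hMf0 x hx) (le_max_left _ _)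
  have hMf_nonneg : 0 ≤ Mf := le_max_right _ _
  have hgradu_bdd : ∀ x ∈ tsupport φ, ‖gradient u x‖ ≤ Cu := by
    intro x hx
    have hxV : x ∈ ball (0 : EuclideanSpace ℝ (Fin n)) (R + 1) := hKV hx
    have hnhds : closedBall (0 : EuclideanSpace ℝ (Fin n)) (R + 2) ∈ nhds x :=
      Filter.mem_of_superset (ball_mem_nhds x one_pos) (hVB x hxV)
    rw [norm_gradient']
    exact norm_fderiv_le_of_lipschitzOn ℝ hnhds hCu
  have hCu_nonneg : (0:ℝ) ≤ Cu := Cu.coe_nonneg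
  have hgradφ_bdd : ∀ x, ‖gradient φ x‖ ≤ Kφ := by
    intro x
    rw [norm_gradient']
    exact norm_fderiv_le_of_lipschitz ℝ hφlip
  have hKφ_nonneg : (0:ℝ) ≤ Kφ := Kφ.coe_nonneg
  have hinvu : ∀ x, |(1 + u x)⁻¹| ≤ 1 := by
    intro x
    have h1 : (0:ℝ) < 1 + u x := by have := hupos x; linarith
    rw [abs_of_pos (inv_pos.2 h1)]
    exact inv_le_one_of_one_le₀ (by linarith [(hupos x).le])
  -- vanishing outside the support
  have hgradφ_out : ∀ x ∉ tsupport φ, gradient φ x = 0 := by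
    intro x hx
    have : fderiv ℝ φ x = 0 := by
      by_contra h
      exact hx (support_fderiv_subset ℝ (by simpa [Function.mem_support] using h))
    rw [gradient, this]
    simp
  -- integrability of H
  have hHint : Integrable H := by
    refine integrable_of_compact_bound H ?_ hφc ?_ (Bφ ^ 2 * (Cu:ℝ) ^ 2 * Mf) ?_
    · exact (((hφcont.measurable.pow_const 2).mul
        ((mgu.norm.pow_const 2).div ((measurable_const.add hucont.measurable).pow_const 2))).mul
        hfcont.measurable).aestronglyMeasurable
    · intro x hx
      have : φ x = 0 := image_eq_zero_of_notMem_tsupport hx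
      simp [hHdef, this]
    · intro x hx
      have e1 : |φ x ^ 2| ≤ Bφ ^ 2 := by
        rw [abs_of_nonneg (sq_nonneg _), ← sq_abs]
        exact pow_le_pow_left₀ (abs_nonneg _) (hBφ x) 2
      have hq0 : (0:ℝ) ≤ ‖gradient u x‖ ^ 2 / (1 + u x) ^ 2 := by positivity
      have e2 : |‖gradient u x‖ ^ 2 / (1 + u x) ^ 2| ≤ (Cu:ℝ) ^ 2 := by
        rw [abs_of_nonneg hq0]
        have h1 : (1:ℝ) ≤ (1 + u x) ^ 2 := by nlinarith [(hupos x).le]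
        calc ‖gradient u x‖ ^ 2 / (1 + u x) ^ 2 ≤ ‖gradient u x‖ ^ 2 :=
              div_le_self (sq_nonneg _) h1
          _ ≤ (Cu:ℝ) ^ 2 := pow_le_pow_left₀ (norm_nonneg _) (hgradu_bdd x hx) 2
      exact abs_prod3_le e1 e2 (hMf x hx)
  -- integrability of G
  have hGint : Integrable G := by
    refine integrable_of_compact_bound G ?_ hφc ?_ (Bφ * 1 * ((Cu:ℝ) * Kφ) * Mf) ?_
    · exact (((hφcont.measurable.mul
        ((measurable_const.add hucont.measurable).inv)).mul
        (mgu.inner mgφ)).mul hfcont.measurable).aestronglyMeasurable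
    · intro x hx
      have : φ x = 0 := image_eq_zero_of_notMem_tsupport hx
      simp [hGdef, this]
    · intro x hx
      have e3 : |⟪gradient u x, gradient φ x⟫| ≤ (Cu:ℝ) * Kφ := by
        refine (abs_real_inner_le_norm _ _).trans ?_
        exact mul_le_mul (hgradu_bdd x hx) (hgradφ_bdd x) (norm_nonneg _) hCu_nonneg
      exact abs_prod4_le (hBφ x) (hinvu x) e3 (hMf x hx)
  -- integrability of Rr
  have hRint : Integrable Rr := by
    refine integrable_of_compact_bound Rr ?_ hφc ?_ ((Kφ:ℝ) ^ 2 * Mf) ?_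
    · exact ((mgφ.norm.pow_const 2).mul hfcont.measurable).aestronglyMeasurable
    · intro x hx
      rw [hRdef2]
      simp [hgradφ_out x hx]
    · intro x hx
      have e1 : |(‖gradient φ x‖:ℝ) ^ 2| ≤ (Kφ:ℝ) ^ 2 := by
        rw [abs_of_nonneg (sq_nonneg _)]
        exact pow_le_pow_left₀ (norm_nonneg _) (hgradφ_bdd x) 2
      exact abs_prod2_le e1 (hMf x hx)
  -- putting it together
  have hint_eq : ∫ x, ⟪gradient u x, gradient ψ x⟫ * f x = (2 * ∫ x, G x) - ∫ x, H x := by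
    rw [integral_congr_ae hae, integral_sub (hGint.const_mul 2) hHint, integral_const_mul]
  have hkey : (∫ x, H x) ≤ 2 * (∫ x, G x) := by
    rw [hint_eq] at hsup0; linarith
  -- pointwise Young inequality
  have hptwise : ∀ x, G x ≤ (1/4) * H x + Rr x := by
    intro x
    have hfx := (hfpos x).le
    have hux := (hupos x).le
    have h1u : (0:ℝ) < 1 + u x := by linarith
    set c : ℝ := φ x * (1 + u x)⁻¹ with hc
    have hc0 : 0 ≤ c := mul_nonneg (hφ0 x) (inv_nonneg.2 h1u.le)
    have hCS : ⟪gradient u x, gradient φ x⟫ ≤ ‖gradient u x‖ * ‖gradient φ x‖ :=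
      real_inner_le_norm _ _
    have hyoung : c * (‖gradient u x‖ * ‖gradient φ x‖) ≤
        (1/4) * (c ^ 2 * ‖gradient u x‖ ^ 2) + ‖gradient φ x‖ ^ 2 := by
      nlinarith [sq_nonneg (c * ‖gradient u x‖ - 2 * ‖gradient φ x‖)]
    have hHx : (1/4) * H x + Rr x =
        ((1/4) * (c ^ 2 * ‖gradient u x‖ ^ 2) + ‖gradient φ x‖ ^ 2) * f x := by
      rw [hHdef, hRdef2, hc]
      field_simp
      try ring
    have hGx : G x = (c * ⟪gradient u x, gradient φ x⟫) * f x := by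
      rw [hGdef, hc]
      try ring
    rw [hGx, hHx]
    apply mul_le_mul_of_nonneg_right _ hfx
    calc c * ⟪gradient u x, gradient φ x⟫ ≤ c * (‖gradient u x‖ * ‖gradient φ x‖) :=
          mul_le_mul_of_nonneg_left hCS hc0
      _ ≤ _ := hyoung
  have hGle : (∫ x, G x) ≤ ∫ x, ((1/4) * H x + Rr x) :=
    integral_mono hGint ((hHint.const_mul _).add hRint) hptwise
  have hsplit : ∫ x, ((1/4) * H x + Rr x) = ((1/4) * (∫ x, H x)) + (∫ x, Rr x) := by
    rw [integral_add (hHint.const_mul _) hRint, integral_const_mul]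
  have hR0 : 0 ≤ (∫ x, Rr x) :=
    integral_nonneg fun x => mul_nonneg (sq_nonneg _) (hfpos x).le
  have : (∫ x, H x) ≤ 16 * (∫ x, Rr x) := by
    rw [hsplit] at hGle
    linarith
  exact this
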